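/- Let τ > 0, let n ≥ 1, and let x_1, …, x_n be real numbers not all zero (so that x̄² = (1/n)∑ x_j² > 0). Define f(μ) = −n·log μ − (1/(2τ²))·∑_{j=1}^n (x_j/μ − 1)² for μ > 0, and let μ̂_τ = (√((x̄)² + 4τ²·x̄²) − x̄)/(2τ²) with x̄ = (1/n)∑ x_j. Then f attains its global maximum over (0, ∞) at μ̂_τ, and μ̂_τ is the unique maximizer: f(μ) < f(μ̂_τ) for every μ > 0 with μ ≠ μ̂_τ. -/

import Mathlib

/-- `f(μ) = −n·log μ − (1/(2τ²))·∑ (x_j/μ − 1)²` attains its global maximum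
over `(0, ∞)` at the constrained MLE `μ̂_τ`, which is the unique maximizer. -/
theorem cmle_is_unique_maximizer (τ : ℝ) (hτ : 0 < τ) (n : ℕ) (hn : 1 ≤ n)
    (x : Fin n → ℝ) (hx : ∃ j, x j ≠ 0) :
    IsMaxOn (fun μ : ℝ => -(n : ℝ) * Real.log μ
        - (1 / (2 * τ ^ 2)) * ∑ j, (x j / μ - 1) ^ 2) (Set.Ioi 0)
      ((Real.sqrt (((1 : ℝ) / n * ∑ j, x j) ^ 2
          + 4 * τ ^ 2 * ((1 : ℝ) / n * ∑ j, (x j) ^ 2))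
        - (1 : ℝ) / n * ∑ j, x j) / (2 * τ ^ 2)) ∧
    ∀ μ : ℝ, 0 < μ →
      μ ≠ (Real.sqrt (((1 : ℝ) / n * ∑ j, x j) ^ 2
          + 4 * τ ^ 2 * ((1 : ℝ) / n * ∑ j, (x j) ^ 2))
        - (1 : ℝ) / n * ∑ j, x j) / (2 * τ ^ 2) →
      (fun μ : ℝ => -(n : ℝ) * Real.log μ
          - (1 / (2 * τ ^ 2)) * ∑ j, (x j / μ - 1) ^ 2) μ
        < (fun μ : ℝ => -(n : ℝ) * Real.log μ
            - (1 / (2 * τ ^ 2)) * ∑ j, (x j / μ - 1) ^ 2)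
          ((Real.sqrt (((1 : ℝ) / n * ∑ j, x j) ^ 2
              + 4 * τ ^ 2 * ((1 : ℝ) / n * ∑ j, (x j) ^ 2))
            - (1 : ℝ) / n * ∑ j, x j) / (2 * τ ^ 2)) := by
  obtain ⟨j0, hj0⟩ := hx
  have hn0 : (0:ℝ) < n := by exact_mod_cast Nat.lt_of_lt_of_le Nat.zero_lt_one hn
  set S1 : ℝ := ∑ j, x j with hS1def
  set S2 : ℝ := ∑ j, (x j) ^ 2 with hS2def
  set m1 : ℝ := 1 / n * S1 with hm1def
  set m2 : ℝ := 1 / n * S2 with hm2def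
  set R : ℝ := Real.sqrt (m1 ^ 2 + 4 * τ ^ 2 * m2) with hRdef
  set μ0 : ℝ := (R - m1) / (2 * τ ^ 2) with hμ0def
  have hS2 : 0 < S2 := by
    rw [hS2def]
    apply Finset.sum_pos' (fun i _ => sq_nonneg _)
    exact ⟨j0, Finset.mem_univ _, by positivity⟩
  have hm2 : 0 < m2 := by rw [hm2def]; positivity
  have hRsq : R ^ 2 = m1 ^ 2 + 4 * τ ^ 2 * m2 := by
    rw [hRdef]; exact Real.sq_sqrt (by positivity)
  have hRabs : |m1| < R := by
    rw [hRdef, ← Real.sqrt_sq_eq_abs]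
    have h4 : (0:ℝ) < 4 * τ ^ 2 * m2 := by positivity
    exact Real.sqrt_lt_sqrt (sq_nonneg _) (by linarith)
  clear_value S1 S2 m1 m2 R μ0
  have hτ2 : (τ:ℝ) ^ 2 ≠ 0 := by positivity
  have hRm1 : m1 < R := lt_of_le_of_lt (le_abs_self m1) hRabs
  have hRm1' : 0 < R + m1 := by have := neg_abs_le m1; linarith
  have hμ0 : 0 < μ0 := by rw [hμ0def]; exact div_pos (by linarith) (by positivity)
  have hμ0ne : μ0 ≠ 0 := ne_of_gt hμ0
  set t0 : ℝ := 1 / μ0 with ht0def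
  clear_value t0
  have ht0 : 0 < t0 := by rw [ht0def]; positivity
  have ht0ne : t0 ≠ 0 := ne_of_gt ht0
  -- key quadratic identity : S2 * t0^2 - S1 * t0 = n * τ^2
  have hkey : S2 * t0 ^ 2 - S1 * t0 = n * τ ^ 2 := by
    have hnne : (n:ℝ) ≠ 0 := ne_of_gt hn0
    have hS1m : S1 = n * m1 := by rw [hm1def]; field_simp
    have hS2m : S2 = n * m2 := by rw [hm2def]; field_simp
    have hRmne : R - m1 ≠ 0 := sub_ne_zero.mpr (ne_of_gt hRm1)
    have ht0val : t0 * (R - m1) = 2 * τ ^ 2 := by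
      rw [ht0def, hμ0def, one_div_div]
      exact div_mul_cancel₀ _ hRmne
    have ht0val2 : t0 * (2 * m2) = R + m1 := by
      have h : t0 * (R - m1) * (R + m1) = 2 * τ ^ 2 * (R + m1) := by rw [ht0val]
      have h2 : t0 * (2 * m2) * (2 * τ ^ 2) = (R + m1) * (2 * τ ^ 2) := by
        linear_combination h - t0 * hRsq
      exact mul_right_cancel₀ (by positivity) h2
    rw [hS1m, hS2m]
    have h3 : (↑n * m2 * t0 ^ 2 - ↑n * m1 * t0 - ↑n * τ ^ 2) * 2 = 0 := by
      linear_combination (n : ℝ) * t0 * ht0val2 + (n : ℝ) * ht0val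
    linarith
  -- sum expansion
  have hsum : ∀ ν : ℝ, ν ≠ 0 → ∑ j, (x j / ν - 1) ^ 2
      = (1/ν) ^ 2 * S2 - 2 * (1/ν) * S1 + n := by
    intro ν hν
    have h1 : ∀ j : Fin n, (x j / ν - 1) ^ 2
        = (1/ν) ^ 2 * (x j) ^ 2 - 2 * (1/ν) * (x j) + 1 := by
      intro j; field_simp; ring
    rw [Finset.sum_congr rfl (fun j _ => h1 j)]
    rw [Finset.sum_add_distrib, Finset.sum_sub_distrib, ← Finset.mul_sum, ← Finset.mul_sum]
    simp [hS1def, hS2def]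
  set c : ℝ := 1 / (2 * τ ^ 2) with hcdef
  clear_value c
  have hc : 0 < c := by rw [hcdef]; positivity
  -- main estimate
  have hmain : ∀ μ : ℝ, 0 < μ →
      -(n : ℝ) * Real.log μ - c * ∑ j, (x j / μ - 1) ^ 2
      ≤ (-(n : ℝ) * Real.log μ0 - c * ∑ j, (x j / μ0 - 1) ^ 2)
        - c * S2 * (1/μ - t0) ^ 2 := by
    intro μ hμ
    rw [hsum μ (ne_of_gt hμ), hsum μ0 hμ0ne]
    have hlog : Real.log μ0 - Real.log μ ≤ μ0 / μ - 1 := by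
      have h := Real.log_le_sub_one_of_pos (show 0 < μ0 / μ by positivity)
      rwa [Real.log_div hμ0ne (ne_of_gt hμ)] at h
    set t : ℝ := 1 / μ with htdef
    clear_value t
    have ht : 0 < t := by rw [htdef]; positivity
    have hμ0μ : μ0 / μ = t / t0 := by
      rw [htdef, ht0def]; field_simp
    rw [hμ0μ] at hlog
    have hident : (n : ℝ) * (t / t0 - 1) - c * (t ^ 2 * S2 - 2 * t * S1 + n)
        + c * (t0 ^ 2 * S2 - 2 * t0 * S1 + n) + c * S2 * (t - t0) ^ 2 = 0 := by
      rw [hcdef]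
      field_simp
      linear_combination ((t0 - t) * 2) * hkey
    have hln : -(n:ℝ) * Real.log μ + (n:ℝ) * Real.log μ0 ≤ (n:ℝ) * (t / t0 - 1) := by
      nlinarith [hlog, hn0]
    have h10 : (1:ℝ)/μ0 = t0 := ht0def.symm
    rw [h10]
    linarith [hident, hln]
  constructor
  · intro μ hμ
    simp only [Set.mem_Ioi] at hμ
    have h := hmain μ hμ
    have h2 : 0 ≤ c * S2 * (1/μ - t0) ^ 2 := by positivity
    show -(n : ℝ) * Real.log μ - c * ∑ j, (x j / μ - 1) ^ 2
        ≤ -(n : ℝ) * Real.log μ0 - c * ∑ j, (x j / μ0 - 1) ^ 2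
    linarith
  · intro μ hμ hne
    have h := hmain μ hμ
    have hts : 1/μ - t0 ≠ 0 := by
      rw [ht0def]
      intro hcon
      apply hne
      have h5 : (1:ℝ)/μ = 1/μ0 := by linarith [sub_eq_zero.mp hcon]
      field_simp at h5
      linarith [h5]
    have h2 : 0 < c * S2 * (1/μ - t0) ^ 2 := by
      have := sq_pos_of_ne_zero hts
      positivity
    show -(n : ℝ) * Real.log μ - c * ∑ j, (x j / μ - 1) ^ 2
        < -(n : ℝ) * Real.log μ0 - c * ∑ j, (x j / μ0 - 1) ^ 2
    exact lt_of_le_of_lt h (sub_lt_self _ h2)
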